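/- Let (Ω, μ) be a probability space and (Y_i)_{i∈ℤ} a family of independent, identically distributed, square-integrable real random variables with variance σ². For each fixed i ∈ ℤ there exists K₀ such that for all K ≥ K₀, the variance of f_K(i) = (2/(K·(K+3)))·(2K·Y_i + Σ_{k=1}^{K−1} a_k^K·(Y_{i−k} + Y_{i+k})) satisfies 16·σ²/K² ≤ Var(f_K(i)) ≤ 8·σ²/K. -/

import Mathlib

open MeasureTheory ProbabilityTheory

/-- The coefficient `a_k^K = Σ_{l=k+1}^{K} (l−k)/l`. -/
noncomputable def mixCoeff (k K : ℕ) : ℝ :=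
  ∑ l ∈ Finset.Icc (k + 1) K, ((l : ℝ) - (k : ℝ)) / (l : ℝ)

/-- The Local Mixup minimizer at index `i`, as a random variable:
`f_K(i) = (2/(K·(K+3)))·(2K·Y_i + Σ_{k=1}^{K−1} a_k^K·(Y_{i−k} + Y_{i+k}))`. -/
noncomputable def mixFrv {Ω : Type*} (Y : ℤ → Ω → ℝ) (K : ℕ) (i : ℤ) (ω : Ω) : ℝ :=
  (2 / ((K : ℝ) * ((K : ℝ) + 3))) *
    (2 * (K : ℝ) * Y i ω +
      ∑ k ∈ Finset.Icc 1 (K - 1), mixCoeff k K * (Y (i - (k : ℤ)) ω + Y (i + (k : ℤ)) ω))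

lemma sum_Icc_neg_symm (g : ℤ → ℝ) (n : ℕ) :
    ∑ d ∈ Finset.Icc (-(n : ℤ)) (n : ℤ), g d
      = g 0 + ∑ k ∈ Finset.Icc 1 n, (g (-(k : ℤ)) + g (k : ℤ)) := by
  induction n with
  | zero => simp
  | succ n ih =>
    have h0 : (-(((n : ℤ)) + 1)) ∉ insert ((n : ℤ) + 1) (Finset.Icc (-(n : ℤ)) (n : ℤ)) := by
      simp only [Finset.mem_insert, Finset.mem_Icc]
      omega
    have h1 : ((n : ℤ) + 1) ∉ Finset.Icc (-(n : ℤ)) (n : ℤ) := by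
      simp only [Finset.mem_Icc]; omega
    have hset : Finset.Icc (-((n : ℕ) + 1 : ℤ)) ((n : ℕ) + 1 : ℤ)
        = insert (-((n : ℤ) + 1)) (insert ((n : ℤ) + 1) (Finset.Icc (-(n : ℤ)) (n : ℤ))) := by
      ext d
      simp only [Finset.mem_insert, Finset.mem_Icc]
      omega
    have hset2 : Finset.Icc 1 (n + 1) = insert (n + 1) (Finset.Icc 1 n) := by
      ext d
      simp only [Finset.mem_insert, Finset.mem_Icc]
      omega
    push_cast
    rw [hset, Finset.sum_insert h0, Finset.sum_insert h1, hset2,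
      Finset.sum_insert (by simp), ih]
    push_cast
    ring

lemma mixCoeff_nonneg (k K : ℕ) : 0 ≤ mixCoeff k K := by
  apply Finset.sum_nonneg
  intro l hl
  have hl' := Finset.mem_Icc.1 hl
  have h1 : (k : ℝ) ≤ (l : ℝ) := by exact_mod_cast Nat.le_of_succ_le hl'.1
  have h2 : (0 : ℝ) ≤ (l : ℝ) := Nat.cast_nonneg l
  exact div_nonneg (by linarith) h2

lemma mixCoeff_le (k K : ℕ) : mixCoeff k K ≤ (K : ℝ) := by
  have h1 : mixCoeff k K ≤ (Finset.Icc (k + 1) K).card • (1 : ℝ) := by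
    apply Finset.sum_le_card_nsmul
    intro l hl
    have hl' := Finset.mem_Icc.1 hl
    have hk : (k : ℝ) ≤ (l : ℝ) := by exact_mod_cast Nat.le_of_succ_le hl'.1
    have hlpos : (0 : ℝ) < (l : ℝ) := by exact_mod_cast Nat.lt_of_lt_of_le (Nat.succ_pos k) hl'.1
    rw [div_le_one hlpos]
    have : (0:ℝ) ≤ (k:ℝ) := Nat.cast_nonneg k
    linarith
  have h2 : ((Finset.Icc (k + 1) K).card : ℝ) ≤ (K : ℝ) := by
    rw [Nat.card_Icc]
    exact_mod_cast (by omega : K + 1 - (k + 1) ≤ K)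
  calc mixCoeff k K ≤ (Finset.Icc (k + 1) K).card • (1 : ℝ) := h1
    _ = ((Finset.Icc (k + 1) K).card : ℝ) := by simp
    _ ≤ (K : ℝ) := h2

lemma mixCoeff_one_ge (K : ℕ) (hK : 2 ≤ K) : ((K : ℝ) - 1) / 2 ≤ mixCoeff 1 K := by
  have h1 : (Finset.Icc 2 K).card • ((1:ℝ)/2) ≤ mixCoeff 1 K := by
    apply Finset.card_nsmul_le_sum
    intro l hl
    have hl' := Finset.mem_Icc.1 hl
    have hl2 : (2 : ℝ) ≤ (l : ℝ) := by exact_mod_cast hl'.1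
    rw [le_div_iff₀ (by linarith)]
    push_cast
    linarith
  have hcard : (Finset.Icc 2 K).card = K - 1 := by rw [Nat.card_Icc]; omega
  rw [hcard] at h1
  have : ((K - 1 : ℕ) : ℝ) = (K : ℝ) - 1 := by
    have : 1 ≤ K := by omega
    push_cast [this]; ring
  calc ((K : ℝ) - 1) / 2 = (K - 1 : ℕ) • ((1:ℝ)/2) := by rw [nsmul_eq_mul, this]; ring
    _ ≤ mixCoeff 1 K := h1

/-- The coefficient of `Y (i + d)` in `mixFrv`. -/
noncomputable def mixW (K : ℕ) (d : ℤ) : ℝ :=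
  (2 / ((K : ℝ) * ((K : ℝ) + 3))) * (if d = 0 then 2 * (K : ℝ) else mixCoeff d.natAbs K)

lemma mixFrv_eq {Ω : Type*} (Y : ℤ → Ω → ℝ) (K : ℕ) (i : ℤ) :
    mixFrv Y K i
      = ∑ d ∈ Finset.Icc (-((K - 1 : ℕ) : ℤ)) ((K - 1 : ℕ) : ℤ),
          fun ω => mixW K d * Y (i + d) ω := by
  funext ω
  simp only [Finset.sum_apply]
  rw [sum_Icc_neg_symm (fun d => mixW K d * Y (i + d) ω) (K - 1)]
  unfold mixFrv mixW
  rw [mul_add, Finset.mul_sum]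
  congr 1
  · simp [mul_assoc]
  · apply Finset.sum_congr rfl
    intro k hk
    have hk1 : 1 ≤ k := (Finset.mem_Icc.1 hk).1
    have h2 : ((k : ℤ)) ≠ 0 := by positivity
    have h1 : (-(k : ℤ)) ≠ 0 := neg_ne_zero.mpr h2
    simp only [if_neg h1, if_neg h2, Int.natAbs_neg, Int.natAbs_natCast]
    have hmi : i + -(k : ℤ) = i - (k : ℤ) := by ring
    rw [hmi]
    ring

/-- For i.i.d. square-integrable random variables `(Y_i)_{i∈ℤ}` with variance
`σ²`, for each fixed `i` there exists `K₀` such that for all `K ≥ K₀`,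
`16·σ²/K² ≤ Var(f_K(i)) ≤ 8·σ²/K`. -/
theorem localMixup_variance_bounds {Ω : Type*} [MeasurableSpace Ω] (μ : Measure Ω)
    [IsProbabilityMeasure μ] (Y : ℤ → Ω → ℝ) (σ : ℝ)
    (hindep : iIndepFun Y μ)
    (hident : ∀ i j : ℤ, IdentDistrib (Y i) (Y j) μ μ)
    (hL2 : ∀ i, MemLp (Y i) 2 μ)
    (hvar : ∀ i, variance (Y i) μ = σ ^ 2)
    (i : ℤ) :
    ∃ K₀ : ℕ, ∀ K : ℕ, K₀ ≤ K →
      16 * σ ^ 2 / (K : ℝ) ^ 2 ≤ variance (mixFrv Y K i) μ ∧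
        variance (mixFrv Y K i) μ ≤ 8 * σ ^ 2 / (K : ℝ) := by
  refine ⟨100, fun K hK => ?_⟩
  have hK2 : 2 ≤ K := by omega
  set x : ℝ := (K : ℝ) with hx
  have hx100 : (100 : ℝ) ≤ x := by rw [hx]; exact_mod_cast hK
  have hxpos : (0 : ℝ) < x := by linarith
  have hσ2 : (0 : ℝ) ≤ σ ^ 2 := sq_nonneg σ
  set s : Finset ℤ := Finset.Icc (-((K - 1 : ℕ) : ℤ)) ((K - 1 : ℕ) : ℤ) with hs
  -- variance computation
  have hvarsum : variance (mixFrv Y K i) μ = ∑ d ∈ s, (mixW K d) ^ 2 * σ ^ 2 := by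
    rw [mixFrv_eq Y K i, ← hs]
    rw [IndepFun.variance_sum (fun d _ => (hL2 (i + d)).const_mul (mixW K d))
      (fun d _ e _ hde => by
        have hne : i + d ≠ i + e := by omega
        exact (hindep.indepFun hne).comp (measurable_id.const_mul (mixW K d))
          (measurable_id.const_mul (mixW K e)))]
    refine Finset.sum_congr rfl fun d _ => ?_
    rw [variance_const_mul (mixW K d) (Y (i + d)) μ, hvar]
  set S : ℝ := ∑ k ∈ Finset.Icc 1 (K - 1), (mixCoeff k K) ^ 2 with hS
  have hc0 : mixW K 0 = 2 / (x * (x + 3)) * (2 * x) := by simp [mixW, hx]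
  have hck : ∀ k ∈ Finset.Icc 1 (K - 1),
      mixW K (-(k : ℤ)) = 2 / (x * (x + 3)) * mixCoeff k K ∧
        mixW K ((k : ℤ)) = 2 / (x * (x + 3)) * mixCoeff k K := by
    intro k hk
    have hk1 : 1 ≤ k := (Finset.mem_Icc.1 hk).1
    have h2 : ((k : ℤ)) ≠ 0 := by positivity
    have h1 : (-(k : ℤ)) ≠ 0 := neg_ne_zero.mpr h2
    constructor <;>
      · simp only [mixW, Int.natAbs_neg, Int.natAbs_natCast, if_neg h1, if_neg h2, hx]
  have hVform : variance (mixFrv Y K i) μ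
      = (2 / (x * (x + 3))) ^ 2 * σ ^ 2 * (4 * x ^ 2 + 2 * S) := by
    rw [hvarsum, hs, sum_Icc_neg_symm (fun d => (mixW K d) ^ 2 * σ ^ 2) (K - 1)]
    have hsum2 : ∑ k ∈ Finset.Icc 1 (K - 1),
        ((mixW K (-(k : ℤ))) ^ 2 * σ ^ 2 + (mixW K ((k : ℤ))) ^ 2 * σ ^ 2)
        = ∑ k ∈ Finset.Icc 1 (K - 1),
            (2 * ((2 / (x * (x + 3))) ^ 2 * σ ^ 2) * (mixCoeff k K) ^ 2) := by
      refine Finset.sum_congr rfl fun k hk => ?_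
      rw [(hck k hk).1, (hck k hk).2]
      ring
    rw [hsum2, hc0, ← Finset.mul_sum, ← hS]
    ring
  -- bounds on S
  have hn1 : ((K - 1 : ℕ) : ℝ) = x - 1 := by
    have h1 : 1 ≤ K := by omega
    push_cast [h1]; ring
  have hSub : S ≤ x ^ 3 := by
    have h1 : S ≤ (Finset.Icc 1 (K - 1)).card • (x ^ 2) := by
      apply Finset.sum_le_card_nsmul
      intro k _
      have := mixCoeff_le k K
      have := mixCoeff_nonneg k K
      nlinarith
    have hcard : (Finset.Icc 1 (K - 1)).card = K - 1 := by rw [Nat.card_Icc]; omega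
    rw [hcard, nsmul_eq_mul, hn1] at h1
    nlinarith
  have hSlb : ((x - 1) / 2) ^ 2 ≤ S := by
    have h1 : (mixCoeff 1 K) ^ 2 ≤ S := by
      apply Finset.single_le_sum (f := fun k => (mixCoeff k K) ^ 2)
        (fun k _ => sq_nonneg _)
      simp only [Finset.mem_Icc]
      omega
    have h2 := mixCoeff_one_ge K hK2
    have h3 : (0 : ℝ) ≤ (x - 1) / 2 := by linarith
    nlinarith
  have hS0 : 0 ≤ S := le_trans (sq_nonneg _) hSlb
  have hxx3 : (0 : ℝ) < x * (x + 3) := by nlinarith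
  constructor
  · -- lower bound
    rw [hVform, div_pow]
    have key : 16 / x ^ 2 ≤ (2 : ℝ) ^ 2 / (x * (x + 3)) ^ 2 * (4 * x ^ 2 + 2 * S) := by
      rw [div_mul_eq_mul_div, div_le_div_iff₀ (by positivity) (by positivity)]
      nlinarith
    calc 16 * σ ^ 2 / x ^ 2 = σ ^ 2 * (16 / x ^ 2) := by ring
      _ ≤ σ ^ 2 * ((2 : ℝ) ^ 2 / (x * (x + 3)) ^ 2 * (4 * x ^ 2 + 2 * S)) :=
          mul_le_mul_of_nonneg_left key hσ2
      _ = (2 : ℝ) ^ 2 / (x * (x + 3)) ^ 2 * σ ^ 2 * (4 * x ^ 2 + 2 * S) := by ring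
  · -- upper bound
    rw [hVform, div_pow]
    have key : (2 : ℝ) ^ 2 / (x * (x + 3)) ^ 2 * (4 * x ^ 2 + 2 * S) ≤ 8 / x := by
      rw [div_mul_eq_mul_div, div_le_div_iff₀ (by positivity) hxpos]
      nlinarith
    calc (2 : ℝ) ^ 2 / (x * (x + 3)) ^ 2 * σ ^ 2 * (4 * x ^ 2 + 2 * S)
        = σ ^ 2 * ((2 : ℝ) ^ 2 / (x * (x + 3)) ^ 2 * (4 * x ^ 2 + 2 * S)) := by ring
      _ ≤ σ ^ 2 * (8 / x) := mul_le_mul_of_nonneg_left key hσ2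
      _ = 8 * σ ^ 2 / x := by ring
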